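/- arXiv:2602.08638 — 2 statements merged into one kernel-verified Lean document; each statement's English description precedes it below -/
import Mathlib

section
/- Let p, q be probability vectors on Fin n (nonnegative entries summing to 1) with q_i > 0 for every i, and define the Kullback–Leibler divergence KL(p‖q) = Σ_i p_i·log(p_i/q_i), with the convention that terms with p_i = 0 contribute 0. Then Pinsker's inequality holds in the form KL(p‖q) ≥ (1/2)·(Σ_i |p_i − q_i|)²; that is, the KL divergence dominates half the squared total-variation (ℓ¹) distance. -/
/-- Kullback–Leibler divergence of two vectors on `Fin n`. Terms with
`p i = 0` contribute `0` since they are multiplied by the zero coefficient. -/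
noncomputable def KLdiv {n : ℕ} (p q : Fin n → ℝ) : ℝ :=
  ∑ i, p i * Real.log (p i / q i)


open Real

/-- Padé-type lower bound for log on `[1, ∞)`. -/
lemma log_ge_pade {t : ℝ} (ht : 1 ≤ t) : 3*(t^2-1)/(t^2+4*t+1) ≤ Real.log t := by
  set F : ℝ → ℝ := fun t => Real.log t - 3*(t^2-1)/(t^2+4*t+1) with hF
  have hder : ∀ x : ℝ, 0 < x → HasDerivAt F
      (x⁻¹ - (6*x*(x^2+4*x+1) - (3*(x^2-1))*(2*x+4))/(x^2+4*x+1)^2) x := by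
    intro x hx
    have hden : x^2+4*x+1 ≠ 0 := by nlinarith
    have h1 : HasDerivAt (fun t : ℝ => 3*(t^2-1)) (6*x) x := by
      have := ((hasDerivAt_pow 2 x).sub_const 1).const_mul (3:ℝ)
      exact this.congr_deriv (by norm_num; ring)
    have h2 : HasDerivAt (fun t : ℝ => t^2+4*t+1) (2*x+4) x := by
      have := ((hasDerivAt_pow 2 x).add ((hasDerivAt_id x).const_mul (4:ℝ))).add_const 1
      exact this.congr_deriv (by norm_num)
    exact (Real.hasDerivAt_log hx.ne').sub (h1.div h2 hden)
  have hmono : MonotoneOn F (Set.Ici 1) := by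
    apply monotoneOn_of_deriv_nonneg (convex_Ici 1)
    · intro x hx
      exact (hder x (lt_of_lt_of_le one_pos hx)).differentiableAt.continuousAt.continuousWithinAt
    · intro x hx
      rw [interior_Ici] at hx
      exact (hder x (lt_trans one_pos hx)).differentiableAt.differentiableWithinAt
    · intro x hx
      rw [interior_Ici] at hx
      have hx0 : (0:ℝ) < x := lt_trans one_pos hx
      rw [(hder x hx0).deriv]
      have hden : (0:ℝ) < (x^2+4*x+1)^2 := by positivity
      have key : (6*x*(x^2+4*x+1) - (3*(x^2-1))*(2*x+4))/(x^2+4*x+1)^2 ≤ x⁻¹ := by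
        rw [inv_eq_one_div]
        rw [div_le_div_iff₀ hden hx0]
        nlinarith [sq_nonneg ((x-1)^2), sq_nonneg (x-1)]
      linarith
  have := hmono (Set.self_mem_Ici) (Set.mem_Ici.mpr ht) ht
  simp only [hF, Real.log_one] at this
  have h1 : (3:ℝ)*(1^2-1)/(1^2+4*1+1) = 0 := by norm_num
  rw [h1] at this
  linarith

/-- Padé-type upper bound for log on `[1, ∞)`. -/
lemma log_le_pade {s : ℝ} (hs : 1 ≤ s) : Real.log s ≤ (s^2+4*s-5)/(4*s+2) := by
  set G : ℝ → ℝ := fun s => (s^2+4*s-5)/(4*s+2) - Real.log s with hG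
  have hder : ∀ x : ℝ, 0 < x → HasDerivAt G
      (((2*x+4)*(4*x+2) - (x^2+4*x-5)*4)/(4*x+2)^2 - x⁻¹) x := by
    intro x hx
    have hden : 4*x+2 ≠ 0 := by nlinarith
    have h1 : HasDerivAt (fun t : ℝ => t^2+4*t-5) (2*x+4) x := by
      have := ((hasDerivAt_pow 2 x).add ((hasDerivAt_id x).const_mul (4:ℝ))).sub_const 5
      exact this.congr_deriv (by norm_num)
    have h2 : HasDerivAt (fun t : ℝ => 4*t+2) (4:ℝ) x := by
      have := ((hasDerivAt_id x).const_mul (4:ℝ)).add_const (2:ℝ)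
      exact this.congr_deriv (by norm_num)
    exact (h1.div h2 hden).sub (Real.hasDerivAt_log hx.ne')
  have hmono : MonotoneOn G (Set.Ici 1) := by
    apply monotoneOn_of_deriv_nonneg (convex_Ici 1)
    · intro x hx
      exact (hder x (lt_of_lt_of_le one_pos hx)).differentiableAt.continuousAt.continuousWithinAt
    · intro x hx
      rw [interior_Ici] at hx
      exact (hder x (lt_trans one_pos hx)).differentiableAt.differentiableWithinAt
    · intro x hx
      rw [interior_Ici] at hx
      have hx0 : (0:ℝ) < x := lt_trans one_pos hx
      rw [(hder x hx0).deriv]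
      have hden : (0:ℝ) < (4*x+2)^2 := by positivity
      have key : x⁻¹ ≤ ((2*x+4)*(4*x+2) - (x^2+4*x-5)*4)/(4*x+2)^2 := by
        rw [inv_eq_one_div]
        rw [div_le_div_iff₀ hx0 hden]
        nlinarith [mul_nonneg (mul_nonneg (sub_nonneg.mpr (Set.mem_Ioi.mp hx).le) (sub_nonneg.mpr (Set.mem_Ioi.mp hx).le)) (sub_nonneg.mpr (Set.mem_Ioi.mp hx).le)]
      linarith
  have := hmono (Set.self_mem_Ici) (Set.mem_Ici.mpr hs) hs
  simp only [hG, Real.log_one] at this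
  have h1 : ((1:ℝ)^2+4*1-5)/(4*1+2) = 0 := by norm_num
  rw [h1] at this
  linarith

/-- Key pointwise inequality. -/
lemma key_ineq {t : ℝ} (ht : 0 < t) :
    (3/2)*(t-1)^2/(t+2) ≤ t * Real.log t - t + 1 := by
  have ht2 : (0:ℝ) < t + 2 := by linarith
  rw [div_le_iff₀ ht2]
  rcases le_total 1 t with h | h
  · have hL := log_ge_pade h
    have hden : (0:ℝ) < t^2+4*t+1 := by nlinarith
    rw [div_le_iff₀ hden] at hL
    -- hL : 3*(t^2-1) ≤ Real.log t * (t^2+4*t+1)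
    nlinarith [mul_le_mul_of_nonneg_left hL (mul_nonneg ht.le ht2.le),
      sq_nonneg ((t-1)^2), sq_nonneg (t-1), mul_nonneg (mul_nonneg ht.le ht.le) (sq_nonneg (t-1))]
  · -- t ≤ 1 : use upper bound at 1/t
    have hs : 1 ≤ 1/t := by rw [le_div_iff₀ ht]; linarith
    have hL := log_le_pade hs
    rw [Real.log_div one_ne_zero ht.ne', Real.log_one] at hL
    -- hL : 0 - log t ≤ ((1/t)^2 + 4*(1/t) - 5)/(4*(1/t)+2)
    have e1 : ((1/t)^2 + 4*(1/t) - 5)/(4*(1/t)+2) = (1 + 4*t - 5*t^2)/(t*(4+2*t)) := by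
      rw [div_eq_div_iff]
      · field_simp
      · positivity
      · positivity
    rw [e1] at hL
    have hden : (0:ℝ) < t*(4+2*t) := by positivity
    rw [le_div_iff₀ hden] at hL
    nlinarith [hL, sq_nonneg (t-1)]

lemma pointwise_kl {p q : ℝ} (hp : 0 ≤ p) (hq : 0 < q) :
    p - q + (3/2)*(p-q)^2/(p+2*q) ≤ p * Real.log (p/q) := by
  rcases eq_or_lt_of_le hp with h | h
  · rw [← h]
    have : (3:ℝ)/2*(0-q)^2/(0+2*q) = 3*q/4 := by
      rw [div_eq_iff (by positivity)]; ring
    rw [zero_mul, this]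
    linarith
  · have ht : (0:ℝ) < p/q := div_pos h hq
    have h1 := key_ineq ht
    have h2 := mul_le_mul_of_nonneg_left h1 hq.le
    have e1 : q * (p/q * Real.log (p/q) - p/q + 1) = p * Real.log (p/q) - p + q := by
      field_simp
    have e2 : q * ((3/2)*(p/q-1)^2/(p/q+2)) = (3/2)*(p-q)^2/(p+2*q) := by
      have hq2 : p/q + 2 = (p + 2*q)/q := by field_simp
      rw [hq2, div_div_eq_mul_div, eq_div_iff (by positivity : (p+2*q:ℝ) ≠ 0)]
      field_simp
    rw [e1, e2] at h2
    linarith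

theorem pinsker_inequality'
    {n : ℕ} (p q : Fin n → ℝ)
    (hp0 : ∀ i, 0 ≤ p i) (hp1 : ∑ i, p i = 1)
    (hq0 : ∀ i, 0 < q i) (hq1 : ∑ i, q i = 1) :
    (1 / 2) * (∑ i, |p i - q i|) ^ 2 ≤ ∑ i, p i * Real.log (p i / q i) := by
  have hsum : ∑ i, (p i - q i + (3/2)*(p i - q i)^2/(p i + 2*q i))
      ≤ ∑ i, p i * Real.log (p i / q i) :=
    Finset.sum_le_sum fun i _ => pointwise_kl (hp0 i) (hq0 i)
  rw [Finset.sum_add_distrib, Finset.sum_sub_distrib, hp1, hq1, sub_self, zero_add] at hsum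
  have hCS : (∑ i, |p i - q i|) ^ 2 / ∑ i, (p i + 2 * q i)
      ≤ ∑ i, |p i - q i| ^ 2 / (p i + 2 * q i) := by
    apply Finset.sq_sum_div_le_sum_sq_div
    intro i _
    have := hp0 i; have := hq0 i; linarith
  rw [Finset.sum_add_distrib, ← Finset.mul_sum, hp1, hq1] at hCS
  simp only [sq_abs] at hCS
  have h3 : ∑ i, (3/2)*(p i - q i)^2/(p i + 2*q i)
      = (3/2) * ∑ i, (p i - q i)^2/(p i + 2*q i) := by
    rw [Finset.mul_sum]
    exact Finset.sum_congr rfl fun i _ => by ring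
  rw [h3] at hsum
  have : (1:ℝ) + 2 * 1 = 3 := by norm_num
  rw [this] at hCS
  nlinarith [hCS, hsum]

/-- **Pinsker's inequality.**
For probability vectors `p, q` on `Fin n` with `q i > 0` for all `i`,
`KL(p‖q) ≥ (1/2)·(Σ_i |p i − q i|)²`. -/
theorem pinsker_inequality
    {n : ℕ} (p q : Fin n → ℝ)
    (hp0 : ∀ i, 0 ≤ p i) (hp1 : ∑ i, p i = 1)
    (hq0 : ∀ i, 0 < q i) (hq1 : ∑ i, q i = 1) :
    (1 / 2) * (∑ i, |p i - q i|) ^ 2 ≤ KLdiv p q :=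
  pinsker_inequality' p q hp0 hp1 hq0 hq1
end

section
/- Let p, q be probability vectors on Fin n (nonnegative entries summing to 1), let m = (p + q)/2, and define the Jensen–Shannon divergence JS(p,q) = (1/2)·Σ_i p_i·log(p_i/m_i) + (1/2)·Σ_i q_i·log(q_i/m_i), with the convention that terms with p_i = 0 (resp. q_i = 0) contribute 0. Then JS(p,q) ≥ (1/8)·(Σ_i |p_i − q_i|)²; that is, the Jensen–Shannon discrepancy dominates one eighth of the squared ℓ¹ distance between the two assignments. -/
open Real

-- log(1+t) ≥ t - t²/2 for t ≥ 0
lemma aux_log_lb {t : ℝ} (ht : 0 ≤ t) : t - t^2/2 ≤ Real.log (1+t) := by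
  have key : MonotoneOn (fun t : ℝ => Real.log (1+t) - t + t^2/2) (Set.Ici 0) := by
    apply monotoneOn_of_deriv_nonneg (convex_Ici 0)
    · apply ContinuousOn.add (ContinuousOn.sub ?_ continuousOn_id) (by fun_prop)
      apply ContinuousOn.log (by fun_prop)
      intro x hx; simp at hx; linarith
    · intro x hx
      rw [interior_Ici] at hx
      simp only [Set.mem_Ioi] at hx
      have h1 : HasDerivAt (fun t : ℝ => Real.log (1+t) - t + t^2/2)
          (1/(1+x) - 1 + x) x := by
        have hl : HasDerivAt (fun t : ℝ => Real.log (1+t)) (1/(1+x)) x := by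
          have := (((hasDerivAt_id x).const_add 1).log (by simp only [id_eq]; positivity))
          simpa using this
        have hq : HasDerivAt (fun t : ℝ => t^2/2) x x := by
          have := ((hasDerivAt_pow 2 x).div_const 2)
          simpa using this
        exact (hl.sub (hasDerivAt_id x)).add hq
      exact h1.differentiableAt.differentiableWithinAt
    · intro x hx
      rw [interior_Ici] at hx
      simp only [Set.mem_Ioi] at hx
      have h1 : HasDerivAt (fun t : ℝ => Real.log (1+t) - t + t^2/2)
          (1/(1+x) - 1 + x) x := by
        have hl : HasDerivAt (fun t : ℝ => Real.log (1+t)) (1/(1+x)) x := by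
          have := (((hasDerivAt_id x).const_add 1).log (by simp only [id_eq]; positivity))
          simpa using this
        have hq : HasDerivAt (fun t : ℝ => t^2/2) x x := by
          have := ((hasDerivAt_pow 2 x).div_const 2)
          simpa using this
        exact (hl.sub (hasDerivAt_id x)).add hq
      rw [h1.deriv]
      have : 1/(1+x) - 1 + x = x^2/(1+x) := by field_simp; ring
      rw [this]
      positivity
  have h0 := key (Set.mem_Ici.2 le_rfl) (Set.mem_Ici.2 ht) ht
  simp at h0
  linarith

-- log(1-t) ≤ -t - t²/2 for 0 ≤ t < 1
lemma aux_log_ub {t : ℝ} (ht : 0 ≤ t) (ht1 : t < 1) : Real.log (1-t) ≤ -t - t^2/2 := by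
  have key : MonotoneOn (fun t : ℝ => -t - t^2/2 - Real.log (1-t)) (Set.Ico 0 1) := by
    apply monotoneOn_of_deriv_nonneg (convex_Ico 0 1)
    · apply ContinuousOn.sub (by fun_prop)
      apply ContinuousOn.log (by fun_prop)
      intro x hx; simp at hx; linarith [hx.2]
    · intro x hx
      rw [interior_Ico] at hx
      obtain ⟨hx0, hx1⟩ := hx
      have h1 : HasDerivAt (fun t : ℝ => -t - t^2/2 - Real.log (1-t))
          (-1 - x - (-1/(1-x))) x := by
        have hl : HasDerivAt (fun t : ℝ => Real.log (1-t)) (-1/(1-x)) x := by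
          have := (((hasDerivAt_id x).const_sub 1).log (by simp only [id_eq]; intro h; linarith))
          simpa using this
        have hq : HasDerivAt (fun t : ℝ => -t - t^2/2) (-1 - x) x := by
          have := ((hasDerivAt_id x).neg.sub ((hasDerivAt_pow 2 x).div_const 2))
          exact this.congr_deriv (by norm_num)
        exact hq.sub hl
      exact h1.differentiableAt.differentiableWithinAt
    · intro x hx
      rw [interior_Ico] at hx
      obtain ⟨hx0, hx1⟩ := hx
      have h1 : HasDerivAt (fun t : ℝ => -t - t^2/2 - Real.log (1-t))
          (-1 - x - (-1/(1-x))) x := by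
        have hl : HasDerivAt (fun t : ℝ => Real.log (1-t)) (-1/(1-x)) x := by
          have := (((hasDerivAt_id x).const_sub 1).log (by simp only [id_eq]; intro h; linarith))
          simpa using this
        have hq : HasDerivAt (fun t : ℝ => -t - t^2/2) (-1 - x) x := by
          have := ((hasDerivAt_id x).neg.sub ((hasDerivAt_pow 2 x).div_const 2))
          exact this.congr_deriv (by norm_num)
        exact hq.sub hl
      rw [h1.deriv]
      have hne : (1:ℝ) - x ≠ 0 := by intro h; linarith
      have : -1 - x - (-1/(1-x)) = x^2/(1-x) := by field_simp; ring
      rw [this]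
      have : (0:ℝ) < 1 - x := by linarith
      positivity
  have h0 := key (Set.mem_Ico.2 ⟨le_refl 0, one_pos⟩) (Set.mem_Ico.2 ⟨ht, ht1⟩) ht
  norm_num [Real.log_one] at h0
  linarith

-- (1+t)log(1+t) + (1-t)log(1-t) ≥ t² for t ∈ [0,1]
lemma aux_key {t : ℝ} (ht : 0 ≤ t) (ht1 : t ≤ 1) :
    t^2 ≤ (1+t) * Real.log (1+t) + (1-t) * Real.log (1-t) := by
  have key : MonotoneOn
      (fun t : ℝ => (1+t) * Real.log (1+t) + (1-t) * Real.log (1-t) - t^2)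
      (Set.Icc 0 1) := by
    apply monotoneOn_of_deriv_nonneg (convex_Icc 0 1)
    · apply ContinuousOn.sub ?_ (by fun_prop)
      apply ContinuousOn.add
      · exact (Real.continuous_mul_log.comp (by continuity)).continuousOn
      · exact (Real.continuous_mul_log.comp (by continuity)).continuousOn
    · intro x hx
      rw [interior_Icc] at hx
      obtain ⟨hx0, hx1⟩ := hx
      have h1 : HasDerivAt
          (fun t : ℝ => (1+t) * Real.log (1+t) + (1-t) * Real.log (1-t) - t^2)
          ((Real.log (1+x) + 1) + (-Real.log (1-x) - 1) - 2*x) x := by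
        have ha : HasDerivAt (fun t : ℝ => (1+t) * Real.log (1+t))
            (Real.log (1+x) + 1) x := by
          have h1a : HasDerivAt (fun t : ℝ => 1 + t) 1 x := (hasDerivAt_id x).const_add 1
          have := h1a.mul (h1a.log (by linarith))
          have hne : (1:ℝ) + x ≠ 0 := by linarith
          refine this.congr_deriv ?_
          field_simp
        have hb : HasDerivAt (fun t : ℝ => (1-t) * Real.log (1-t))
            (-Real.log (1-x) - 1) x := by
          have h1b : HasDerivAt (fun t : ℝ => 1 - t) (-1) x := by
            simpa using (hasDerivAt_id x).const_sub 1
          have hne : (1:ℝ) - x ≠ 0 := by intro h; linarith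
          have := h1b.mul (h1b.log hne)
          refine this.congr_deriv ?_
          field_simp
          ring
        have hq : HasDerivAt (fun t : ℝ => t^2) (2*x) x := by
          simpa using hasDerivAt_pow 2 x
        exact (ha.add hb).sub hq
      exact h1.differentiableAt.differentiableWithinAt
    · intro x hx
      rw [interior_Icc] at hx
      obtain ⟨hx0, hx1⟩ := hx
      have h1 : HasDerivAt
          (fun t : ℝ => (1+t) * Real.log (1+t) + (1-t) * Real.log (1-t) - t^2)
          ((Real.log (1+x) + 1) + (-Real.log (1-x) - 1) - 2*x) x := by
        have ha : HasDerivAt (fun t : ℝ => (1+t) * Real.log (1+t))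
            (Real.log (1+x) + 1) x := by
          have h1a : HasDerivAt (fun t : ℝ => 1 + t) 1 x := (hasDerivAt_id x).const_add 1
          have := h1a.mul (h1a.log (by linarith))
          have hne : (1:ℝ) + x ≠ 0 := by linarith
          refine this.congr_deriv ?_
          field_simp
        have hb : HasDerivAt (fun t : ℝ => (1-t) * Real.log (1-t))
            (-Real.log (1-x) - 1) x := by
          have h1b : HasDerivAt (fun t : ℝ => 1 - t) (-1) x := by
            simpa using (hasDerivAt_id x).const_sub 1
          have hne : (1:ℝ) - x ≠ 0 := by intro h; linarith
          have := h1b.mul (h1b.log hne)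
          refine this.congr_deriv ?_
          field_simp
          ring
        have hq : HasDerivAt (fun t : ℝ => t^2) (2*x) x := by
          simpa using hasDerivAt_pow 2 x
        exact (ha.add hb).sub hq
      rw [h1.deriv]
      have l1 := aux_log_lb hx0.le
      have l2 := aux_log_ub hx0.le hx1
      linarith
  have h0 := key (Set.mem_Icc.2 ⟨le_refl 0, zero_le_one⟩)
    (Set.mem_Icc.2 ⟨ht, ht1⟩) ht
  simp at h0
  linarith

-- pointwise Pinsker-type bound
lemma aux_pointwise (a b : ℝ) (ha : 0 ≤ a) (hb : 0 ≤ b) :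
    (a-b)^2 / (2*(a+b)) ≤
      a * Real.log (a / ((a+b)/2)) + b * Real.log (b / ((a+b)/2)) := by
  rcases eq_or_lt_of_le (add_nonneg ha hb) with hs | hs
  · have ha0 : a = 0 := by linarith [ha, hb]
    have hb0 : b = 0 := by linarith
    simp [ha0, hb0]
  · -- wlog a ≥ b by symmetry
    wlog hab : b ≤ a with H
    · have := H b a hb ha (by linarith [hs]) (by linarith [le_of_not_ge hab])
      have e1 : (b - a)^2 = (a - b)^2 := by ring
      have e2 : b + a = a + b := by ring
      rw [e1, e2] at this
      linarith
    · set s := a + b with hs_def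
      set t := (a - b) / s with ht_def
      have hsne : s ≠ 0 := ne_of_gt hs
      have ht0 : 0 ≤ t := div_nonneg (by linarith) hs.le
      have ht1 : t ≤ 1 := by
        rw [div_le_one hs]; linarith
      have key := aux_key ht0 ht1
      have e1 : a / ((a+b)/2) = 1 + t := by
        rw [ht_def, hs_def]; field_simp [show a + b ≠ 0 from hsne]; ring
      have e2 : b / ((a+b)/2) = 1 - t := by
        rw [ht_def, hs_def]; field_simp [show a + b ≠ 0 from hsne]; ring
      rw [e1, e2]
      have ea : (s/2) * (1 + t) = a := by
        rw [ht_def]; field_simp; ring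
      have eb : (s/2) * (1 - t) = b := by
        rw [ht_def]; field_simp; ring
      have elhs : (a-b)^2 / (2*(a+b)) = (s/2) * t^2 := by
        rw [ht_def, hs_def]; field_simp
      rw [elhs]
      calc (s/2) * t^2 ≤ (s/2) * ((1+t) * Real.log (1+t) + (1-t) * Real.log (1-t)) :=
            mul_le_mul_of_nonneg_left key (by positivity)
        _ = a * Real.log (1+t) + b * Real.log (1-t) := by
            rw [← ea, ← eb]; ring

/-- Jensen–Shannon divergence of two vectors on `Fin n`, with midpoint
`m = (p+q)/2`. Terms with `p i = 0` (resp. `q i = 0`) contribute `0`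
since they are multiplied by the zero coefficient. -/
noncomputable def JSdiv {n : ℕ} (p q : Fin n → ℝ) : ℝ :=
  (1 / 2) * ∑ i, p i * Real.log (p i / ((p i + q i) / 2)) +
  (1 / 2) * ∑ i, q i * Real.log (q i / ((p i + q i) / 2))

/-- **Jensen–Shannon divergence dominates one eighth of the squared ℓ¹ distance.**
For probability vectors `p, q` on `Fin n` (nonnegative entries summing to `1`),
`JS(p,q) ≥ (1/8)·(Σ_i |p i − q i|)²`. -/
theorem JSdiv_ge_one_eighth_sq_l1
    {n : ℕ} (p q : Fin n → ℝ)
    (hp0 : ∀ i, 0 ≤ p i) (hp1 : ∑ i, p i = 1)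
    (hq0 : ∀ i, 0 ≤ q i) (hq1 : ∑ i, q i = 1) :
    (1 / 8) * (∑ i, |p i - q i|) ^ 2 ≤ JSdiv p q := by
  have key : ∀ i, (p i - q i)^2 / (2*(p i + q i)) ≤
      p i * Real.log (p i / ((p i + q i)/2)) + q i * Real.log (q i / ((p i + q i)/2)) :=
    fun i => aux_pointwise _ _ (hp0 i) (hq0 i)
  -- sum of p+q is 2
  have hsum2 : ∑ i, (p i + q i) = 2 := by
    rw [Finset.sum_add_distrib, hp1, hq1]; norm_num
  -- Cauchy–Schwarz
  have hCS : (∑ i, |p i - q i|)^2 ≤ (∑ i, (p i - q i)^2 / (p i + q i)) * 2 := by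
    have H := Finset.sum_mul_sq_le_sq_mul_sq Finset.univ
      (fun i => |p i - q i| / Real.sqrt (p i + q i)) (fun i => Real.sqrt (p i + q i))
    have e1 : ∀ i : Fin n,
        |p i - q i| / Real.sqrt (p i + q i) * Real.sqrt (p i + q i) = |p i - q i| := by
      intro i
      rcases eq_or_lt_of_le (add_nonneg (hp0 i) (hq0 i)) with hs | hs
      · have hpz : p i = 0 := by linarith [hp0 i, hq0 i]
        have hqz : q i = 0 := by linarith [hp0 i, hq0 i]
        simp [hpz, hqz]
      · exact div_mul_cancel₀ _ (ne_of_gt (Real.sqrt_pos.2 hs))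
    have e2 : ∀ i : Fin n,
        (|p i - q i| / Real.sqrt (p i + q i))^2 = (p i - q i)^2 / (p i + q i) := by
      intro i
      rw [div_pow, sq_abs, Real.sq_sqrt (add_nonneg (hp0 i) (hq0 i))]
    have e3 : ∀ i : Fin n, (Real.sqrt (p i + q i))^2 = p i + q i := fun i =>
      Real.sq_sqrt (add_nonneg (hp0 i) (hq0 i))
    calc (∑ i, |p i - q i|)^2
        = (∑ i, |p i - q i| / Real.sqrt (p i + q i) * Real.sqrt (p i + q i))^2 := by
          rw [Finset.sum_congr rfl (fun i _ => (e1 i))]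
      _ ≤ (∑ i, (|p i - q i| / Real.sqrt (p i + q i))^2) * ∑ i, (Real.sqrt (p i + q i))^2 := H
      _ = (∑ i, (p i - q i)^2 / (p i + q i)) * 2 := by
          rw [Finset.sum_congr rfl (fun i _ => (e2 i)),
            Finset.sum_congr rfl (fun i _ => (e3 i)), hsum2]
  have hdivs : ∑ i, (p i - q i)^2 / (2*(p i + q i))
      = (∑ i, (p i - q i)^2 / (p i + q i)) / 2 := by
    rw [Finset.sum_div]
    exact Finset.sum_congr rfl fun i _ => by rw [div_div, mul_comm]
  have hJS : (1/2) * ∑ i, (p i - q i)^2 / (2*(p i + q i)) ≤ JSdiv p q := by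
    unfold JSdiv
    rw [← mul_add, ← Finset.sum_add_distrib]
    exact mul_le_mul_of_nonneg_left (Finset.sum_le_sum fun i _ => key i) (by norm_num)
  calc (1/8) * (∑ i, |p i - q i|)^2
      ≤ (1/8) * ((∑ i, (p i - q i)^2 / (p i + q i)) * 2) := by
        apply mul_le_mul_of_nonneg_left hCS (by norm_num)
    _ = (1/2) * ∑ i, (p i - q i)^2 / (2*(p i + q i)) := by rw [hdivs]; ring
    _ ≤ JSdiv p q := hJS
end
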